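/- The triple u(x,y,t) = −(σ/(2δ))(2ay+b)² + (σ/(2δ))y² + c₁y + c₂, s(x,y,t) = (b₂/a₂)x + x²/2 + ay² + by + c, φ(x,y,t) = (b₂/(δa₂))x + x²/(2δ) + (σ/(2δ))(2ay+b)² + b₂²/(2δa₂²) solves the dDS system, provided the constants satisfy k₀ = b²(σ+6a) − 2c₂δ(1+2σa) − 2σbc₁δ = 0, k₁ = 24a²b − 2c₁δ + 4abσ − 8σac₁δ − 2b = 0, and k₂ = (4a²−1)(6a+σ) = 0. -/
import Mathlib


noncomputable section

/-- Partial derivative in the first (x) argument. -/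
def px (f : ℝ → ℝ → ℝ → ℝ) : ℝ → ℝ → ℝ → ℝ :=
  fun x y t => deriv (fun x' => f x' y t) x

/-- Partial derivative in the second (y) argument. -/
def py (f : ℝ → ℝ → ℝ → ℝ) : ℝ → ℝ → ℝ → ℝ :=
  fun x y t => deriv (fun y' => f x y' t) y

/-- Partial derivative in the third (t) argument. -/
def pt (f : ℝ → ℝ → ℝ → ℝ) : ℝ → ℝ → ℝ → ℝ :=
  fun x y t => deriv (fun t' => f x y t') t

/-- The dispersionless Davey–Stewartson system at a point (x,y,t):
u_t + (u s_x)_x + σ(u s_y)_y = 0,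
s_t + (1/2)(s_x² + σ s_y²) − δφ = 0,
σφ_yy − φ_xx + u_xx + σu_yy = 0. -/
def dDSeq (σ δ : ℝ) (u s φ : ℝ → ℝ → ℝ → ℝ) (x y t : ℝ) : Prop :=
  pt u x y t + px (fun x y t => u x y t * px s x y t) x y t
      + σ * py (fun x y t => u x y t * py s x y t) x y t = 0 ∧
  pt s x y t + (1/2) * ((px s x y t) ^ 2 + σ * (py s x y t) ^ 2) - δ * φ x y t = 0 ∧
  σ * py (py φ) x y t - px (px φ) x y t + px (px u) x y t + σ * py (py u) x y t = 0

/-- Derivative of a cubic polynomial. -/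
lemma deriv_cubic (p₀ p₁ p₂ p₃ : ℝ) (f : ℝ → ℝ)
    (hf : ∀ v, f v = p₀ + p₁ * v + p₂ * v ^ 2 + p₃ * v ^ 3) (x : ℝ) :
    deriv f x = p₁ + 2 * p₂ * x + 3 * p₃ * x ^ 2 := by
  have hfe : f = fun v => p₀ + p₁ * v + p₂ * v ^ 2 + p₃ * v ^ 3 := funext hf
  have h1 : HasDerivAt (fun v : ℝ => v) 1 x := hasDerivAt_id x
  have h2 : HasDerivAt (fun v : ℝ => v ^ 2) (2 * x) x := by
    simpa using hasDerivAt_pow 2 x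
  have h3 : HasDerivAt (fun v : ℝ => v ^ 3) (3 * x ^ 2) x := by
    simpa using hasDerivAt_pow 3 x
  have h : HasDerivAt (fun v : ℝ => p₀ + p₁ * v + p₂ * v ^ 2 + p₃ * v ^ 3)
      (0 + p₁ * 1 + p₂ * (2 * x) + p₃ * (3 * x ^ 2)) x :=
    (((hasDerivAt_const x p₀).add (h1.const_mul p₁)).add (h2.const_mul p₂)).add
      (h3.const_mul p₃)
  rw [hfe, h.deriv]; ring

/-- The explicit triple u = −(σ/(2δ))(2ay+b)² + (σ/(2δ))y² + c₁y + c₂,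
s = (b₂/a₂)x + x²/2 + ay² + by + c,
φ = (b₂/(δa₂))x + x²/(2δ) + (σ/(2δ))(2ay+b)² + b₂²/(2δa₂²)
solves the dDS system provided k₀ = k₁ = k₂ = 0. -/
theorem stmt_19 (σ δ a₂ a b c b₂ c₁ c₂ : ℝ)
    (hσ : σ = 1 ∨ σ = -1) (hδ : δ ≠ 0) (ha₂ : a₂ ≠ 0)
    (hk₀ : b ^ 2 * (σ + 6 * a) - 2 * c₂ * δ * (1 + 2 * σ * a) - 2 * σ * b * c₁ * δ = 0)
    (hk₁ : 24 * a ^ 2 * b - 2 * c₁ * δ + 4 * a * b * σ - 8 * σ * a * c₁ * δ - 2 * b = 0)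
    (hk₂ : (4 * a ^ 2 - 1) * (6 * a + σ) = 0)
    (u s φ : ℝ → ℝ → ℝ → ℝ)
    (hu : ∀ x y t, u x y t
      = -(σ / (2 * δ)) * (2 * a * y + b) ^ 2 + (σ / (2 * δ)) * y ^ 2 + c₁ * y + c₂)
    (hs : ∀ x y t, s x y t
      = (b₂ / a₂) * x + x ^ 2 / 2 + a * y ^ 2 + b * y + c)
    (hφ : ∀ x y t, φ x y t
      = (b₂ / (δ * a₂)) * x + x ^ 2 / (2 * δ) + (σ / (2 * δ)) * (2 * a * y + b) ^ 2
        + b₂ ^ 2 / (2 * δ * a₂ ^ 2)) :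
    ∀ x y t : ℝ, dDSeq σ δ u s φ x y t := by
  have hσ2 : σ ^ 2 = 1 := by rcases hσ with h | h <;> rw [h] <;> norm_num
  -- first derivatives
  have hpts : ∀ x y t, pt s x y t = 0 := by
    intro x y t
    have h := deriv_cubic ((b₂ / a₂) * x + x ^ 2 / 2 + a * y ^ 2 + b * y + c) 0 0 0
      (fun t' => s x y t') (fun v => by simp only [hs]; ring) t
    simp only [pt]; rw [h]; ring
  have hpxs : ∀ x y t, px s x y t = b₂ / a₂ + x := by
    intro x y t
    have h := deriv_cubic (a * y ^ 2 + b * y + c) (b₂ / a₂) (1/2) 0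
      (fun x' => s x' y t) (fun v => by simp only [hs]; ring) x
    simp only [px]; rw [h]; ring
  have hpys : ∀ x y t, py s x y t = b + 2 * a * y := by
    intro x y t
    have h := deriv_cubic ((b₂ / a₂) * x + x ^ 2 / 2 + c) b a 0
      (fun y' => s x y' t) (fun v => by simp only [hs]; ring) y
    simp only [py]; rw [h]; ring
  have hptu : ∀ x y t, pt u x y t = 0 := by
    intro x y t
    have h := deriv_cubic (-(σ / (2 * δ)) * (2 * a * y + b) ^ 2 + (σ / (2 * δ)) * y ^ 2
        + c₁ * y + c₂) 0 0 0 (fun t' => u x y t') (fun v => by simp only [hu]; ring) t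
    simp only [pt]; rw [h]; ring
  have hpxu : ∀ x y t, px u x y t = 0 := by
    intro x y t
    have h := deriv_cubic (-(σ / (2 * δ)) * (2 * a * y + b) ^ 2 + (σ / (2 * δ)) * y ^ 2
        + c₁ * y + c₂) 0 0 0 (fun x' => u x' y t) (fun v => by simp only [hu]; ring) x
    simp only [px]; rw [h]; ring
  have hpyu : ∀ x y t, py u x y t
      = (c₁ - 2 * σ * a * b / δ) + 2 * (σ / (2 * δ) - 2 * σ * a ^ 2 / δ) * y := by
    intro x y t
    have h := deriv_cubic (c₂ - σ * b ^ 2 / (2 * δ)) (c₁ - 2 * σ * a * b / δ)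
      (σ / (2 * δ) - 2 * σ * a ^ 2 / δ) 0
      (fun y' => u x y' t) (fun v => by simp only [hu]; ring) y
    simp only [py]; rw [h]; ring
  have hpxφ : ∀ x y t, px φ x y t = b₂ / (δ * a₂) + (1 / δ) * x := by
    intro x y t
    have h := deriv_cubic ((σ / (2 * δ)) * (2 * a * y + b) ^ 2 + b₂ ^ 2 / (2 * δ * a₂ ^ 2))
      (b₂ / (δ * a₂)) (1 / (2 * δ)) 0
      (fun x' => φ x' y t) (fun v => by simp only [hφ]; ring) x
    simp only [px]; rw [h]; ring
  have hpyφ : ∀ x y t, py φ x y t = 2 * σ * a * b / δ + (4 * σ * a ^ 2 / δ) * y := by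
    intro x y t
    have h := deriv_cubic ((b₂ / (δ * a₂)) * x + x ^ 2 / (2 * δ) + σ * b ^ 2 / (2 * δ)
        + b₂ ^ 2 / (2 * δ * a₂ ^ 2)) (2 * σ * a * b / δ) (2 * σ * a ^ 2 / δ) 0
      (fun y' => φ x y' t) (fun v => by simp only [hφ]; ring) y
    simp only [py]; rw [h]; ring
  -- second derivatives
  have hpxxu : ∀ x y t, px (px u) x y t = 0 := by
    intro x y t
    have h := deriv_cubic 0 0 0 0 (fun x' => px u x' y t)
      (fun v => by simp only [hpxu]; ring) x
    simp only [px] at h ⊢; rw [h]; ring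
  have hpyyu : ∀ x y t, py (py u) x y t = 2 * (σ / (2 * δ) - 2 * σ * a ^ 2 / δ) := by
    intro x y t
    have h := deriv_cubic (c₁ - 2 * σ * a * b / δ) (2 * (σ / (2 * δ) - 2 * σ * a ^ 2 / δ)) 0 0
      (fun y' => py u x y' t) (fun v => by simp only [hpyu]; ring) y
    simp only [py] at h ⊢; rw [h]; ring
  have hpxxφ : ∀ x y t, px (px φ) x y t = 1 / δ := by
    intro x y t
    have h := deriv_cubic (b₂ / (δ * a₂)) (1 / δ) 0 0
      (fun x' => px φ x' y t) (fun v => by simp only [hpxφ]; ring) x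
    simp only [px] at h ⊢; rw [h]; ring
  have hpyyφ : ∀ x y t, py (py φ) x y t = 4 * σ * a ^ 2 / δ := by
    intro x y t
    have h := deriv_cubic (2 * σ * a * b / δ) (4 * σ * a ^ 2 / δ) 0 0
      (fun y' => py φ x y' t) (fun v => by simp only [hpyφ]; ring) y
    simp only [py] at h ⊢; rw [h]; ring
  intro x y t
  refine ⟨?_, ?_, ?_⟩
  · -- first equation
    have hA : px (fun x y t => u x y t * px s x y t) x y t
        = -(σ / (2 * δ)) * (2 * a * y + b) ^ 2 + (σ / (2 * δ)) * y ^ 2 + c₁ * y + c₂ := by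
      have h := deriv_cubic
        ((-(σ / (2 * δ)) * (2 * a * y + b) ^ 2 + (σ / (2 * δ)) * y ^ 2 + c₁ * y + c₂)
          * (b₂ / a₂))
        (-(σ / (2 * δ)) * (2 * a * y + b) ^ 2 + (σ / (2 * δ)) * y ^ 2 + c₁ * y + c₂) 0 0
        (fun x' => u x' y t * px s x' y t) (fun v => by simp only [hu, hpxs]; ring) x
      simp only [px] at h ⊢; rw [h]; ring
    have hB : py (fun x y t => u x y t * py s x y t) x y t
        = ((c₂ - σ * b ^ 2 / (2 * δ)) * (2 * a) + (c₁ - 2 * σ * a * b / δ) * b)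
          + 2 * ((c₁ - 2 * σ * a * b / δ) * (2 * a)
              + (σ / (2 * δ) - 2 * σ * a ^ 2 / δ) * b) * y
          + 3 * ((σ / (2 * δ) - 2 * σ * a ^ 2 / δ) * (2 * a)) * y ^ 2 := by
      have h := deriv_cubic
        ((c₂ - σ * b ^ 2 / (2 * δ)) * b)
        ((c₂ - σ * b ^ 2 / (2 * δ)) * (2 * a) + (c₁ - 2 * σ * a * b / δ) * b)
        ((c₁ - 2 * σ * a * b / δ) * (2 * a) + (σ / (2 * δ) - 2 * σ * a ^ 2 / δ) * b)
        ((σ / (2 * δ) - 2 * σ * a ^ 2 / δ) * (2 * a))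
        (fun y' => u x y' t * py s x y' t) (fun v => by simp only [hu, hpys]; ring) y
      simp only [py] at h ⊢; rw [h]
    rw [hptu, hA, hB]
    rcases hσ with h | h <;> subst h
    · linear_combination (-(y^2) * hk₂ - y * hk₁ - hk₀) / (2*δ)
        - (c₁*y + c₂ + 2*a*c₁*y + 2*a*c₂ + c₁*(2*a*y+b)) * mul_inv_cancel₀ hδ
    · linear_combination (-(y^2) * hk₂ - y * hk₁ - hk₀) / (2*δ)
        - (c₁*y + c₂ - 2*a*c₁*y - 2*a*c₂ - c₁*(2*a*y+b)) * mul_inv_cancel₀ hδ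
  · -- second equation
    rw [hpts, hpxs, hpys, hφ]
    linear_combination (-(b₂^2/(2*a₂^2) + (b₂/a₂)*x + x^2/2 + (σ/2)*(b + 2*a*y)^2))
      * mul_inv_cancel₀ hδ
  · -- third equation
    rw [hpyyφ, hpxxφ, hpxxu, hpyyu]
    linear_combination (1 / δ) * hσ2
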